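/- Let R be a commutative ring and let M and N be R-Lie algebras acting on each other. Then the map M × N → M ⊗ N, (m, n) ↦ m ⊗ n, into the non-abelian tensor product of Lie algebras is a universal Lie pairing: it is a Lie pairing, and for every Lie pairing h : M × N → P into an R-Lie algebra P there exists a unique Lie algebra homomorphism φ : M ⊗ N → P with φ(m ⊗ n) = h(m, n) for all m ∈ M, n ∈ N. -/

import Mathlib

universe u v

/-- An `R`-bilinear pairing `A × B → C` of modules, given as a plain two-argument
function. -/
def IsBilinearPairing (R : Type*) {A B C : Type*} [CommRing R]
    [AddCommGroup A] [Module R A] [AddCommGroup B] [Module R B]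
    [AddCommGroup C] [Module R C] (f : A → B → C) : Prop :=
  (∀ (r : R) a b, f (r • a) b = r • f a b) ∧
  (∀ (r : R) a b, f a (r • b) = r • f a b) ∧
  (∀ a a' b, f (a + a') b = f a b + f a' b) ∧
  (∀ a b b', f a (b + b') = f a b + f a b')

/-- An action of an `R`-Lie algebra `M` on an `R`-Lie algebra `N`: an `R`-bilinear map
`(m, n) ↦ m • n` with `⁅m, m'⁆ • n = m • (m' • n) − m' • (m • n)` and
`m • ⁅n, n'⁆ = ⁅m • n, n'⁆ + ⁅n, m • n'⁆`. -/
def IsLieAction (R : Type*) {M N : Type*} [CommRing R]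
    [LieRing M] [LieAlgebra R M] [LieRing N] [LieAlgebra R N]
    (act : M → N → N) : Prop :=
  IsBilinearPairing R act ∧
  (∀ m m' n, act ⁅m, m'⁆ n = act m (act m' n) - act m' (act m n)) ∧
  (∀ m n n', act m ⁅n, n'⁆ = ⁅act m n, n'⁆ + ⁅n, act m n'⁆)

/-- A Lie pairing `h : M × N → P` (Ellis) for Lie algebras `M`, `N` acting on each other
via `actM` and `actN`. -/
def IsLiePairing (R : Type*) {M N P : Type*} [CommRing R]
    [LieRing M] [LieAlgebra R M] [LieRing N] [LieAlgebra R N]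
    [LieRing P] [LieAlgebra R P]
    (actM : M → N → N) (actN : N → M → M) (h : M → N → P) : Prop :=
  IsBilinearPairing R h ∧
  (∀ m m' n, h ⁅m, m'⁆ n = h m (actM m' n) - h m' (actM m n)) ∧
  (∀ m n n', h m ⁅n, n'⁆ = h (actN n' m) n - h (actN n m) n') ∧
  (∀ m m' n n', h (actN n m) (actM m' n') = -⁅h m n, h m' n'⁆)

/-- A crossed module of `R`-Lie algebras over `L`: a Lie algebra homomorphism `μ : M → L`
together with an action of `L` on `M` such that `μ(l • m) = ⁅l, μ m⁆` and
`μ(m) • m' = ⁅m, m'⁆`. -/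
def IsLieCrossedModule {R L M : Type*} [CommRing R]
    [LieRing L] [LieAlgebra R L] [LieRing M] [LieAlgebra R M]
    (μ : M →ₗ⁅R⁆ L) (act : L → M → M) : Prop :=
  IsLieAction R act ∧
  (∀ l m, μ (act l m) = ⁅l, μ m⁆) ∧
  (∀ m m', act (μ m) m' = ⁅m, m'⁆)

/-- The defining relations of the non-abelian tensor product of Lie algebras (Ellis). -/
def lieTensorRels (R : Type u) (M N : Type v) [CommRing R]
    [LieRing M] [LieAlgebra R M] [LieRing N] [LieAlgebra R N]
    (actM : M → N → N) (actN : N → M → M) :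
    Set (FreeLieAlgebra R (M × N)) :=
  { x | (∃ (r : R) (m : M) (n : N),
          x = FreeLieAlgebra.of R (r • m, n) - r • FreeLieAlgebra.of R (m, n)) ∨
        (∃ (r : R) (m : M) (n : N),
          x = FreeLieAlgebra.of R (m, r • n) - r • FreeLieAlgebra.of R (m, n)) ∨
        (∃ (m m' : M) (n : N),
          x = FreeLieAlgebra.of R (m + m', n) - FreeLieAlgebra.of R (m, n) -
            FreeLieAlgebra.of R (m', n)) ∨
        (∃ (m : M) (n n' : N),
          x = FreeLieAlgebra.of R (m, n + n') - FreeLieAlgebra.of R (m, n) -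
            FreeLieAlgebra.of R (m, n')) ∨
        (∃ (m m' : M) (n : N),
          x = FreeLieAlgebra.of R (⁅m, m'⁆, n) - FreeLieAlgebra.of R (m, actM m' n) +
            FreeLieAlgebra.of R (m', actM m n)) ∨
        (∃ (m : M) (n n' : N),
          x = FreeLieAlgebra.of R (m, ⁅n, n'⁆) - FreeLieAlgebra.of R (actN n' m, n) +
            FreeLieAlgebra.of R (actN n m, n')) ∨
        (∃ (m m' : M) (n n' : N),
          x = ⁅FreeLieAlgebra.of R (m, n), FreeLieAlgebra.of R (m', n')⁆ +
            FreeLieAlgebra.of R (actN n m, actM m' n')) }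

/-- The non-abelian tensor product of Lie algebras (Ellis): the quotient of the free Lie
algebra on `M × N` by the Lie ideal generated by the tensor relations. -/
abbrev NALieTensor (R : Type u) (M N : Type v) [CommRing R]
    [LieRing M] [LieAlgebra R M] [LieRing N] [LieAlgebra R N]
    (actM : M → N → N) (actN : N → M → M) : Type _ :=
  FreeLieAlgebra R (M × N) ⧸
    LieSubmodule.lieSpan R (FreeLieAlgebra R (M × N)) (lieTensorRels R M N actM actN)

/-- The generator `m ⊗ n` of the non-abelian tensor product of Lie algebras. -/
noncomputable abbrev lieTensorOf {R : Type u} {M N : Type v} [CommRing R]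
    [LieRing M] [LieAlgebra R M] [LieRing N] [LieAlgebra R N]
    {actM : M → N → N} {actN : N → M → M} (m : M) (n : N) :
    NALieTensor R M N actM actN :=
  LieSubmodule.Quotient.mk (FreeLieAlgebra.of R (m, n))

/-- Lift a Lie algebra homomorphism vanishing on an ideal to the quotient. -/
noncomputable def LieIdealQuotientLift {R L P : Type*} [CommRing R] [LieRing L]
    [LieAlgebra R L] [LieRing P] [LieAlgebra R P] (I : LieIdeal R L) (f : L →ₗ⁅R⁆ P)
    (hf : ∀ x ∈ I, f x = 0) : L ⧸ I →ₗ⁅R⁆ P :=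
  { (I : Submodule R L).liftQ f.toLinearMap (fun x hx => hf x hx) with
    map_lie' := by
      intro x y
      obtain ⟨a, rfl⟩ := LieSubmodule.Quotient.surjective_mk' I x
      obtain ⟨b, rfl⟩ := LieSubmodule.Quotient.surjective_mk' I y
      exact f.map_lie a b }

/-- The quotient map by a Lie ideal, as a Lie algebra homomorphism. -/
noncomputable def lieQuotMk {R L : Type*} [CommRing R] [LieRing L] [LieAlgebra R L]
    (I : LieIdeal R L) : L →ₗ⁅R⁆ L ⧸ I :=
  { (I : Submodule R L).mkQ with map_lie' := fun {_ _} => rfl }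

/-- The map `(m, n) ↦ m ⊗ n` into the non-abelian tensor product of Lie algebras is a
universal Lie pairing: it is a Lie pairing, and every Lie pairing `h : M × N → P`
factors through it via a unique Lie algebra homomorphism. -/
theorem lieTensor_universal_lie_pairing
    (R : Type u) {M N : Type v} [CommRing R]
    [LieRing M] [LieAlgebra R M] [LieRing N] [LieAlgebra R N]
    (actM : M → N → N) (actN : N → M → M)
    (hactM : IsLieAction R actM) (hactN : IsLieAction R actN) :
    IsLiePairing R actM actN
      (fun m n => (lieTensorOf m n : NALieTensor R M N actM actN)) ∧
    ∀ (P : Type w) [LieRing P] [LieAlgebra R P] (h : M → N → P),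
      IsLiePairing R actM actN h →
        ∃! φ : NALieTensor R M N actM actN →ₗ⁅R⁆ P,
          ∀ (m : M) (n : N), φ (lieTensorOf m n) = h m n := by
  constructor
  · -- the canonical map is a Lie pairing
    have h0 : ∀ x ∈ lieTensorRels R M N actM actN,
        (LieSubmodule.Quotient.mk'
          (LieSubmodule.lieSpan R (FreeLieAlgebra R (M × N))
            (lieTensorRels R M N actM actN))) x = 0 := fun x hx =>
      (LieSubmodule.Quotient.mk_eq_zero _).2 (LieSubmodule.subset_lieSpan hx)
    refine ⟨⟨?_, ?_, ?_, ?_⟩, ?_, ?_, ?_⟩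
    · intro r m n
      have h1 := h0 _ (Or.inl ⟨r, m, n, rfl⟩)
      rw [map_sub, map_smul, sub_eq_zero] at h1
      exact h1
    · intro r m n
      have h1 := h0 _ (Or.inr (Or.inl ⟨r, m, n, rfl⟩))
      rw [map_sub, map_smul, sub_eq_zero] at h1
      exact h1
    · intro m m' n
      have h1 := h0 _ (Or.inr (Or.inr (Or.inl ⟨m, m', n, rfl⟩)))
      rw [map_sub, map_sub, sub_sub, sub_eq_zero] at h1
      exact h1
    · intro m n n'
      have h1 := h0 _ (Or.inr (Or.inr (Or.inr (Or.inl ⟨m, n, n', rfl⟩))))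
      rw [map_sub, map_sub, sub_sub, sub_eq_zero] at h1
      exact h1
    · intro m m' n
      have h1 := h0 _ (Or.inr (Or.inr (Or.inr (Or.inr (Or.inl ⟨m, m', n, rfl⟩)))))
      rw [map_add, map_sub, sub_add, sub_eq_zero] at h1
      exact h1
    · intro m n n'
      have h1 := h0 _ (Or.inr (Or.inr (Or.inr (Or.inr (Or.inr (Or.inl ⟨m, n, n', rfl⟩))))))
      rw [map_add, map_sub, sub_add, sub_eq_zero] at h1
      exact h1
    · intro m m' n n'
      have h1 := h0 _ (Or.inr (Or.inr (Or.inr (Or.inr (Or.inr (Or.inr ⟨m, m', n, n', rfl⟩))))))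
      rw [map_add] at h1
      exact eq_neg_of_add_eq_zero_right h1
  · -- universal property
    intro P _ _ h hpair
    obtain ⟨⟨hb1, hb2, hb3, hb4⟩, hp2, hp3, hp4⟩ := hpair
    set f : FreeLieAlgebra R (M × N) →ₗ⁅R⁆ P :=
      FreeLieAlgebra.lift R (fun p => h p.1 p.2) with hf
    have hfof : ∀ (m : M) (n : N), f (FreeLieAlgebra.of R (m, n)) = h m n := fun m n =>
      FreeLieAlgebra.lift_of_apply _ _
    have hker : ∀ x ∈ LieSubmodule.lieSpan R (FreeLieAlgebra R (M × N))
        (lieTensorRels R M N actM actN), f x = 0 := by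
      intro x hx
      have hle : LieSubmodule.lieSpan R (FreeLieAlgebra R (M × N))
          (lieTensorRels R M N actM actN) ≤ f.ker := by
        rw [LieSubmodule.lieSpan_le]
        rintro y (⟨r, m, n, rfl⟩ | ⟨r, m, n, rfl⟩ | ⟨m, m', n, rfl⟩ | ⟨m, n, n', rfl⟩ |
          ⟨m, m', n, rfl⟩ | ⟨m, n, n', rfl⟩ | ⟨m, m', n, n', rfl⟩) <;>
          simp only [SetLike.mem_coe, LieHom.mem_ker, map_add, map_sub,
            map_smul, LieHom.map_lie, hfof]
        · rw [hb1]; abel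
        · rw [hb2]; abel
        · rw [hb3]; abel
        · rw [hb4]; abel
        · rw [hp2]; abel
        · rw [hp3]; abel
        · rw [hp4]; abel
      exact LieHom.mem_ker.1 (hle hx)
    refine ⟨LieIdealQuotientLift _ f hker, fun m n => hfof m n, ?_⟩
    intro ψ hψ
    have hcomp : ψ.comp (lieQuotMk _) = f := by
      rw [hf, ← FreeLieAlgebra.lift_unique]
      funext p
      exact hψ p.1 p.2
    apply LieHom.ext
    intro x
    obtain ⟨a, rfl⟩ := LieSubmodule.Quotient.surjective_mk' _ x
    have h2 : ψ (lieQuotMk _ a) = f a := by rw [← hcomp]; rfl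
    exact h2
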